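/- arXiv:1006.4347 — 6 statements merged into one kernel-verified Lean document; each statement's English description precedes it below -/
import Mathlib

section
/- Let p be an odd prime and let ζ ∈ ℤ_p. For a ∈ ℚ_p, let Φ_a denote the unique ℚ_p-algebra endomorphism of V := ℚ_p[X]/(X^p) sending the class x of X to 1 − Σ_{n=0}^{p−1} C(a,n)(−x)^n (the truncation mod X^p of the binomial series for 1−(1−x)^a); this is well-defined because that element has zero constant term, so its p-th power vanishes in V. Then for all a, b ∈ ℚ_p one has Φ_a ∘ Φ_b = Φ_{a·b} as ℚ_p-algebra endomorphisms of V. (This is the multiplicativity ψ_a ψ_b = ψ_{ab} of Adams operations on the p-adic K-theory of CP^{p−1}, used throughout Section 5.) -/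
open Polynomial

noncomputable def pbinom (p : ℕ) [Fact p.Prime] (y : ℚ_[p]) (n : ℕ) : ℚ_[p] :=
  (descPochhammer ℚ_[p] n).eval y / (n.factorial : ℚ_[p])

noncomputable abbrev TruncV (p : ℕ) [Fact p.Prime] : Type :=
  Polynomial ℚ_[p] ⧸ Ideal.span {(Polynomial.X : Polynomial ℚ_[p]) ^ p}

noncomputable def xV (p : ℕ) [Fact p.Prime] : TruncV p :=
  Ideal.Quotient.mk _ Polynomial.X

noncomputable def phiImg (p : ℕ) [Fact p.Prime] (a : ℚ_[p]) : TruncV p :=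
  1 - ∑ n ∈ Finset.range p, pbinom p a n • (-xV p) ^ n

section aux
variable (p : ℕ) [Fact p.Prime]

lemma TruncV_eq_adjoinRoot : TruncV p = AdjoinRoot ((X : Polynomial ℚ_[p]) ^ p) := rfl

lemma xV_pow_eq_zero {n : ℕ} (hn : p ≤ n) : (xV p) ^ n = 0 := by
  have h : (xV p) ^ p = 0 := by
    rw [xV, ← map_pow]
    exact Ideal.Quotient.eq_zero_iff_mem.mpr (Ideal.subset_span rfl)
  exact pow_eq_zero_of_le hn h

lemma neg_xV_pow_eq_zero {n : ℕ} (hn : p ≤ n) : (-xV p) ^ n = 0 := by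
  rw [show (-xV p) = (-1) * xV p by ring, mul_pow, xV_pow_eq_zero p hn, mul_zero]

/-- vanishing lemma -/
lemma poly_vanish (P : Polynomial (TruncV p))
    (h : ∀ k : ℕ, P.eval (algebraMap ℚ_[p] (TruncV p) (k : ℚ_[p])) = 0) (y : ℚ_[p]) :
    P.eval (algebraMap ℚ_[p] (TruncV p) y) = 0 := by
  have key : ∀ (φ : TruncV p →ₗ[ℚ_[p]] ℚ_[p]) (z : ℚ_[p]),
      φ (P.eval (algebraMap ℚ_[p] (TruncV p) z)) = 0 := by
    intro φ z
    set Q : Polynomial ℚ_[p] := ∑ i ∈ P.support, C (φ (P.coeff i)) * X ^ i with hQdef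
    have hQ : ∀ w : ℚ_[p], Q.eval w = φ (P.eval (algebraMap ℚ_[p] (TruncV p) w)) := by
      intro w
      rw [hQdef, Polynomial.eval_finset_sum]
      conv_rhs => rw [Polynomial.eval_eq_sum, Polynomial.sum, map_sum φ]
      refine Finset.sum_congr rfl fun i _ => ?_
      rw [eval_mul, eval_C, eval_pow, eval_X, ← map_pow, mul_comm (P.coeff i),
        ← Algebra.smul_def, map_smul, smul_eq_mul]
      ring
    have hQ0 : Q = 0 := by
      apply Polynomial.eq_zero_of_infinite_isRoot
      apply Set.infinite_of_injective_forall_mem (f := (Nat.cast : ℕ → ℚ_[p]))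
        Nat.cast_injective
      intro k
      simp only [Set.mem_setOf_eq, IsRoot.def]
      rw [hQ, h k, map_zero]
    rw [← hQ z, hQ0, eval_zero]
  set L := AdjoinRoot.modByMonicHom (g := (X : Polynomial ℚ_[p]) ^ p) (monic_X_pow p)
    with hL
  have hLv : L (P.eval (algebraMap ℚ_[p] (TruncV p) y)) = 0 := by
    apply Polynomial.ext
    intro j
    rw [coeff_zero]
    exact key ((Polynomial.lcoeff ℚ_[p] j).comp L) y
  have := AdjoinRoot.mk_leftInverse (monic_X_pow p (R := ℚ_[p]))
    (P.eval (algebraMap ℚ_[p] (TruncV p) y))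
  rw [hL] at hLv
  rw [hLv, map_zero] at this
  exact this.symm

end aux

section main
variable (p : ℕ) [Fact p.Prime]

noncomputable def dd (n : ℕ) : Polynomial ℚ_[p] :=
  C ((n.factorial : ℚ_[p])⁻¹) * descPochhammer ℚ_[p] n

lemma dd_eval (n : ℕ) (y : ℚ_[p]) : (dd p n).eval y = pbinom p y n := by
  simp [dd, pbinom, div_eq_mul_inv, mul_comm]

noncomputable def uu (a : ℚ_[p]) : TruncV p :=
  ∑ n ∈ Finset.range p, pbinom p a n • (-xV p) ^ n

lemma phiImg_eq (a : ℚ_[p]) : phiImg p a = 1 - uu p a := rfl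

lemma pbinom_natCast (k n : ℕ) : pbinom p (k : ℚ_[p]) n = (k.choose n : ℚ_[p]) := by
  rw [pbinom, descPochhammer_eval_eq_descFactorial, Nat.descFactorial_eq_factorial_mul_choose,
    Nat.cast_mul, mul_div_cancel_left₀ _ (Nat.cast_ne_zero.mpr n.factorial_ne_zero)]

lemma uu_natCast (k : ℕ) : uu p (k : ℚ_[p]) = (1 - xV p) ^ k := by
  rw [uu]
  simp only [pbinom_natCast, Nat.cast_smul_eq_nsmul, nsmul_eq_mul]
  rw [show (1 : TruncV p) - xV p = (-xV p) + 1 by ring, add_pow]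
  calc ∑ n ∈ Finset.range p, (k.choose n : TruncV p) * (-xV p) ^ n
      = ∑ n ∈ Finset.range (max p (k+1)), (k.choose n : TruncV p) * (-xV p) ^ n :=
        Finset.sum_subset (Finset.range_subset_range.mpr (le_max_left p (k+1)))
          (fun n _ hn => by rw [neg_xV_pow_eq_zero p (by simpa using hn), mul_zero])
    _ = ∑ n ∈ Finset.range (max p (k+1)), (-xV p) ^ n * 1 ^ (k - n) * (k.choose n : TruncV p) :=
        Finset.sum_congr rfl fun n _ => by rw [one_pow, mul_one, mul_comm]
    _ = ∑ n ∈ Finset.range (k+1), (-xV p) ^ n * 1 ^ (k - n) * (k.choose n : TruncV p) :=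
        (Finset.sum_subset (Finset.range_subset_range.mpr (le_max_right p (k+1)))
          (fun n _ hn => by
            rw [Nat.choose_eq_zero_of_lt (by simpa using hn), Nat.cast_zero, mul_zero])).symm

lemma sum_choose_nilpotent {R : Type*} [CommRing R] (w : R) (hw : w ^ p = 0) (k : ℕ) :
    ∑ n ∈ Finset.range p, (k.choose n : R) * w ^ n = (1 + w) ^ k := by
  rw [show (1 : R) + w = w + 1 by ring, add_pow]
  calc ∑ n ∈ Finset.range p, (k.choose n : R) * w ^ n
      = ∑ n ∈ Finset.range (max p (k+1)), (k.choose n : R) * w ^ n :=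
        Finset.sum_subset (Finset.range_subset_range.mpr (le_max_left p (k+1)))
          (fun n _ hn => by rw [pow_eq_zero_of_le (by simpa using hn) hw, mul_zero])
    _ = ∑ n ∈ Finset.range (max p (k+1)), w ^ n * 1 ^ (k - n) * (k.choose n : R) :=
        Finset.sum_congr rfl fun n _ => by rw [one_pow, mul_one, mul_comm]
    _ = ∑ n ∈ Finset.range (k+1), w ^ n * 1 ^ (k - n) * (k.choose n : R) :=
        (Finset.sum_subset (Finset.range_subset_range.mpr (le_max_right p (k+1)))
          (fun n _ hn => by
            rw [Nat.choose_eq_zero_of_lt (by simpa using hn), Nat.cast_zero, mul_zero])).symm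

set_option synthInstance.maxHeartbeats 400000 in
lemma uu_sub_one_pow (m : ℕ) : (uu p (m : ℚ_[p]) - 1) ^ p = 0 := by
  have hdvd : (X : Polynomial ℚ_[p]) ∣ ((1 - X) ^ m - 1) := by
    rw [X_dvd_iff]
    simp [coeff_zero_eq_eval_zero]
  obtain ⟨c, hc⟩ := hdvd
  have hmk : uu p (m : ℚ_[p]) - 1 = Ideal.Quotient.mk _ ((1 - X) ^ m - 1) := by
    rw [uu_natCast, xV]
    simp only [map_sub, map_pow, map_one]
  rw [hmk, ← map_pow, hc, mul_pow, Ideal.Quotient.eq_zero_iff_mem]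
  exact Ideal.mul_mem_right _ _ (Ideal.subset_span rfl)

lemma key_nat (m k : ℕ) :
    ∑ n ∈ Finset.range p, pbinom p (k : ℚ_[p]) n • (uu p (m : ℚ_[p]) - 1) ^ n
      = uu p ((m : ℚ_[p]) * (k : ℚ_[p])) := by
  have h1 : ∑ n ∈ Finset.range p, pbinom p (k : ℚ_[p]) n • (uu p (m : ℚ_[p]) - 1) ^ n
      = ∑ n ∈ Finset.range p, (k.choose n : TruncV p) * (uu p (m : ℚ_[p]) - 1) ^ n := by
    refine Finset.sum_congr rfl fun n _ => ?_
    rw [pbinom_natCast, Nat.cast_smul_eq_nsmul, nsmul_eq_mul]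
  rw [h1, sum_choose_nilpotent p _ (uu_sub_one_pow p m) k]
  rw [show (1 : TruncV p) + (uu p (m : ℚ_[p]) - 1) = uu p (m : ℚ_[p]) by ring]
  rw [uu_natCast, ← pow_mul, ← uu_natCast, Nat.cast_mul]

end main

section steps
variable (p : ℕ) [Fact p.Prime]

lemma eval_map_alg (q : Polynomial ℚ_[p]) (y : ℚ_[p]) :
    (q.map (algebraMap ℚ_[p] (TruncV p))).eval (algebraMap ℚ_[p] (TruncV p) y)
      = algebraMap ℚ_[p] (TruncV p) (q.eval y) := by
  rw [eval_map, eval₂_at_apply]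

lemma key_natb (a : ℚ_[p]) (k : ℕ) :
    ∑ n ∈ Finset.range p, pbinom p (k : ℚ_[p]) n • (uu p a - 1) ^ n
      = uu p (a * (k : ℚ_[p])) := by
  set alg := algebraMap ℚ_[p] (TruncV p) with halg
  set W : Polynomial (TruncV p) :=
    (∑ m ∈ Finset.range p, (dd p m).map alg * C ((-xV p) ^ m)) - 1 with hW
  set PP : Polynomial (TruncV p) :=
    (∑ n ∈ Finset.range p, C (alg (pbinom p (k : ℚ_[p]) n)) * W ^ n)
      - ∑ n ∈ Finset.range p, ((dd p n).comp (X * C (k : ℚ_[p]))).map alg * C ((-xV p) ^ n)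
    with hPP
  have hWe : ∀ y : ℚ_[p], W.eval (alg y) = uu p y - 1 := by
    intro y
    rw [hW, eval_sub, eval_one, eval_finset_sum]
    congr 1
    rw [uu]
    refine Finset.sum_congr rfl fun m _ => ?_
    rw [eval_mul, eval_C, eval_map_alg, dd_eval]
    exact (Algebra.smul_def _ _).symm
  have heval : ∀ y : ℚ_[p], PP.eval (alg y)
      = (∑ n ∈ Finset.range p, pbinom p (k : ℚ_[p]) n • (uu p y - 1) ^ n)
        - uu p (y * (k : ℚ_[p])) := by
    intro y
    rw [hPP, eval_sub, eval_finset_sum, eval_finset_sum]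
    congr 1
    · refine Finset.sum_congr rfl fun n _ => ?_
      rw [eval_mul, eval_C, eval_pow, hWe]
      exact (Algebra.smul_def _ _).symm
    · rw [uu]
      refine Finset.sum_congr rfl fun n _ => ?_
      rw [eval_mul, eval_C, eval_map_alg, eval_comp, eval_mul, eval_X, eval_C, dd_eval]
      exact (Algebra.smul_def _ _).symm
  have hnat : ∀ j : ℕ, PP.eval (alg (j : ℚ_[p])) = 0 := by
    intro j
    rw [heval, sub_eq_zero]
    exact key_nat p j k
  have := poly_vanish p PP hnat a
  rw [heval] at this
  exact sub_eq_zero.mp this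

lemma key_id (a b : ℚ_[p]) :
    ∑ n ∈ Finset.range p, pbinom p b n • (uu p a - 1) ^ n = uu p (a * b) := by
  set alg := algebraMap ℚ_[p] (TruncV p) with halg
  set PP : Polynomial (TruncV p) :=
    (∑ n ∈ Finset.range p, (dd p n).map alg * C ((uu p a - 1) ^ n))
      - ∑ n ∈ Finset.range p, ((dd p n).comp (C a * X)).map alg * C ((-xV p) ^ n)
    with hPP
  have heval : ∀ y : ℚ_[p], PP.eval (alg y)
      = (∑ n ∈ Finset.range p, pbinom p y n • (uu p a - 1) ^ n) - uu p (a * y) := by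
    intro y
    rw [hPP, eval_sub, eval_finset_sum, eval_finset_sum]
    congr 1
    · refine Finset.sum_congr rfl fun n _ => ?_
      rw [eval_mul, eval_C, eval_map_alg, dd_eval]
      exact (Algebra.smul_def _ _).symm
    · rw [uu]
      refine Finset.sum_congr rfl fun n _ => ?_
      rw [eval_mul, eval_C, eval_map_alg, eval_comp, eval_mul, eval_X, eval_C, dd_eval]
      exact (Algebra.smul_def _ _).symm
  have hnat : ∀ j : ℕ, PP.eval (alg (j : ℚ_[p])) = 0 := by
    intro j
    rw [heval, sub_eq_zero]
    exact key_natb p a j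
  have := poly_vanish p PP hnat b
  rw [heval] at this
  exact sub_eq_zero.mp this

end steps

theorem adams_mul (p : ℕ) [Fact p.Prime] (hp : Odd p) (ζ : ℤ_[p]) (a b : ℚ_[p])
    (Φa Φb Φab : TruncV p →ₐ[ℚ_[p]] TruncV p)
    (ha : Φa (xV p) = phiImg p a) (hb : Φb (xV p) = phiImg p b)
    (hab : Φab (xV p) = phiImg p (a * b)) :
    Φa.comp Φb = Φab := by
  have hgen : Φa (Φb (xV p)) = Φab (xV p) := by
    rw [hb, hab, phiImg_eq, phiImg_eq, map_sub, map_one]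
    congr 1
    rw [uu, map_sum, ← key_id p a b]
    refine Finset.sum_congr rfl fun n _ => ?_
    rw [map_smul, map_pow, map_neg, ha, phiImg_eq, neg_sub]
  have hcomp : (Φa.comp Φb).comp (Ideal.Quotient.mkₐ ℚ_[p]
        (Ideal.span {(X : Polynomial ℚ_[p]) ^ p}))
      = Φab.comp (Ideal.Quotient.mkₐ ℚ_[p] (Ideal.span {(X : Polynomial ℚ_[p]) ^ p})) := by
    refine Polynomial.algHom_ext ?_
    simpa [xV] using hgen
  apply AlgHom.ext
  intro v
  obtain ⟨f, rfl⟩ := Ideal.Quotient.mk_surjective v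
  exact DFunLike.congr_fun hcomp f
end

section
/- Let p be an odd prime and let ζ ∈ ℤ_p be a primitive (p−1)-st root of unity (i.e. ζ^{p−1} = 1 and ζ has multiplicative order p−1). Let Φ_ζ be the ℚ_p-algebra endomorphism of V := ℚ_p[X]/(X^p) sending the class x of X to 1 − Σ_{n=0}^{p−1} C(ζ,n)(−x)^n. Then Φ_ζ^{p−1} = id_V, i.e. the (p−1)-fold composite of Φ_ζ with itself is the identity. -/
open Polynomial Finset

namespace Adams
variable (p : ℕ) [Fact p.Prime]

lemma xpow : (xV p) ^ p = 0 := by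
  show (Ideal.Quotient.mk _ (X : Polynomial ℚ_[p])) ^ p = 0
  rw [← map_pow, Ideal.Quotient.eq_zero_iff_mem]
  exact Ideal.subset_span rfl

lemma tpow : (-xV p) ^ p = 0 := by
  have h : (-xV p) = (-1 : TruncV p) * xV p := by ring
  rw [h, mul_pow, xpow, mul_zero]

noncomputable def Pn (n : ℕ) : Polynomial ℚ_[p] :=
  (n.factorial : ℚ_[p])⁻¹ • descPochhammer ℚ_[p] n

lemma pbinom_eq (b : ℚ_[p]) (n : ℕ) : pbinom p b n = (Pn p n).eval b := by
  simp [pbinom, Pn, eval_smul, smul_eq_mul, div_eq_inv_mul]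

lemma Pn_natDegree_le (n : ℕ) : (Pn p n).natDegree ≤ n := by
  refine (natDegree_smul_le _ _).trans ?_
  rw [descPochhammer_natDegree]

lemma pbinom_nat (m n : ℕ) : pbinom p (m : ℚ_[p]) n = (m.choose n : ℚ_[p]) := by
  have h := descPochhammer_eval_eq_descFactorial ℚ_[p] m n
  rw [pbinom, h, Nat.descFactorial_eq_factorial_mul_choose]
  have : (n.factorial : ℚ_[p]) ≠ 0 := Nat.cast_ne_zero.mpr n.factorial_ne_zero
  push_cast
  field_simp

lemma expand (P : ℕ → Polynomial ℚ_[p]) (hP : ∀ n < p, (P n).natDegree < p)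
    (v : ℕ → TruncV p) (b : ℚ_[p]) :
    ∑ n ∈ range p, (P n).eval b • v n
      = ∑ i ∈ range p, b ^ i • ∑ n ∈ range p, (P n).coeff i • v n := by
  rw [Finset.sum_congr rfl (fun n hn => ?_), Finset.sum_comm]
  · exact Finset.sum_congr rfl fun i _ => by rw [Finset.smul_sum]
  · rw [eval_eq_sum_range' (hP n (Finset.mem_range.mp hn)) b, Finset.sum_smul]
    exact Finset.sum_congr rfl fun i _ => by rw [mul_comm, mul_smul]

lemma nat_dense (N : ℕ) (w : ℕ → TruncV p)
    (h : ∀ m : ℕ, ∑ i ∈ range N, ((m : ℚ_[p])) ^ i • w i = 0) (b : ℚ_[p]) :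
    ∑ i ∈ range N, b ^ i • w i = 0 := by
  have hw : ∀ i, i < N → w i = 0 := by
    intro i hi
    set B := Module.Basis.ofVectorSpace ℚ_[p] (TruncV p) with hB
    rw [← (LinearEquiv.map_eq_zero_iff B.repr)]
    ext j
    have key : ∀ z : TruncV p, B.repr z j = B.coord j z := fun z => rfl
    set q : Polynomial ℚ_[p] := ∑ k ∈ range N, Polynomial.monomial k (B.coord j (w k)) with hq
    have hq0 : q = 0 := by
      apply Polynomial.eq_zero_of_infinite_isRoot
      apply Set.infinite_of_injective_forall_mem
        (f := fun m : ℕ => (m : ℚ_[p])) Nat.cast_injective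
      intro m
      show q.IsRoot (m : ℚ_[p])
      have h2 := congrArg (B.coord j) (h m)
      rw [map_sum] at h2
      simp only [map_smul, smul_eq_mul, map_zero] at h2
      rw [IsRoot, hq, eval_finset_sum]
      simpa [mul_comm] using h2
    have hc : q.coeff i = B.coord j (w i) := by
      rw [hq]
      simp only [finset_sum_coeff, coeff_monomial]
      rw [Finset.sum_eq_single i]
      · simp
      · intro k _ hk; simp [hk]
      · intro hni; exact absurd (Finset.mem_range.mpr hi) hni
    rw [hq0] at hc
    simp only [Finsupp.coe_zero, Pi.zero_apply]
    rw [key, ← hc, coeff_zero]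
  calc ∑ i ∈ range N, b ^ i • w i = ∑ i ∈ range N, b ^ i • (0 : TruncV p) := by
        exact Finset.sum_congr rfl fun i hi => by rw [hw i (Finset.mem_range.mp hi)]
    _ = 0 := by simp

lemma ext_nat (P Q : ℕ → Polynomial ℚ_[p]) (hP : ∀ n < p, (P n).natDegree < p)
    (hQ : ∀ n < p, (Q n).natDegree < p) (v u : ℕ → TruncV p)
    (h : ∀ m : ℕ, ∑ n ∈ range p, (P n).eval (m : ℚ_[p]) • v n
        = ∑ n ∈ range p, (Q n).eval (m : ℚ_[p]) • u n) (b : ℚ_[p]) :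
    ∑ n ∈ range p, (P n).eval b • v n = ∑ n ∈ range p, (Q n).eval b • u n := by
  rw [expand p P hP v b, expand p Q hQ u b, ← sub_eq_zero, ← Finset.sum_sub_distrib]
  have := nat_dense p p
    (fun i => (∑ n ∈ range p, (P n).coeff i • v n) - (∑ n ∈ range p, (Q n).coeff i • u n))
    (fun m => by
      have hm := h m
      rw [expand p P hP v, expand p Q hQ u, ← sub_eq_zero, ← Finset.sum_sub_distrib] at hm
      simpa [smul_sub] using hm) b
  simpa [smul_sub] using this

noncomputable def GG (s : TruncV p) (b : ℚ_[p]) : TruncV p :=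
  ∑ n ∈ range p, pbinom p b n • s ^ n

noncomputable def FF (a : ℚ_[p]) : TruncV p := GG p (-xV p) a

lemma GG_nat (s : TruncV p) (hs : s ^ p = 0) (m : ℕ) :
    GG p s (m : ℚ_[p]) = (1 + s) ^ m := by
  have hp1 : 0 < p := (Fact.out : p.Prime).pos
  set M := max p (m + 1) with hM
  have h1 : GG p s (m : ℚ_[p]) = ∑ n ∈ range M, (m.choose n : ℚ_[p]) • s ^ n := by
    rw [GG]
    rw [Finset.sum_congr rfl (fun n _ => by rw [pbinom_nat])]
    apply Finset.sum_subset (Finset.range_subset_range.mpr (le_max_left _ _))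
    intro n _ hn
    have hpn : p ≤ n := by
      by_contra hc
      exact hn (Finset.mem_range.mpr (lt_of_not_ge hc))
    have : s ^ n = 0 := by
      rw [show n = p + (n - p) by omega, pow_add, hs, zero_mul]
    rw [this, smul_zero]
  have h2 : (1 + s) ^ m = ∑ n ∈ range M, (m.choose n : ℚ_[p]) • s ^ n := by
    rw [add_comm, add_pow]
    have : ∀ n ∈ range (m + 1), s ^ n * 1 ^ (m - n) * (m.choose n : TruncV p)
        = (m.choose n : ℚ_[p]) • s ^ n := by
      intro n _
      rw [one_pow, mul_one, Nat.cast_smul_eq_nsmul, nsmul_eq_mul, mul_comm]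
    rw [Finset.sum_congr rfl this]
    apply Finset.sum_subset (Finset.range_subset_range.mpr (le_max_right _ _))
    intro n _ hn
    have : m < n := by
      by_contra hc
      exact hn (Finset.mem_range.mpr (by omega))
    rw [Nat.choose_eq_zero_of_lt this]
    simp
  rw [h1, h2]

lemma pbinom_zero (b : ℚ_[p]) : pbinom p b 0 = 1 := by
  simp [pbinom]

lemma s_factor (a : ℚ_[p]) : ∃ g : TruncV p, FF p a - 1 = (-xV p) * g := by
  refine ⟨∑ i ∈ range (p - 1), pbinom p a (i + 1) • (-xV p) ^ i, ?_⟩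
  have hp1 : p = (p - 1) + 1 := (Nat.succ_pred_eq_of_pos (Fact.out : p.Prime).pos).symm
  rw [FF, GG]
  rw [show range p = range ((p - 1) + 1) from by rw [← hp1]]
  rw [Finset.sum_range_succ']
  rw [pbinom_zero]
  simp only [pow_zero, smul_eq_mul, one_smul]
  rw [add_sub_cancel_right, Finset.mul_sum]
  exact Finset.sum_congr rfl fun i _ => by
    rw [mul_smul_comm, ← pow_succ']

lemma s_pow (a : ℚ_[p]) : (FF p a - 1) ^ p = 0 := by
  obtain ⟨g, hg⟩ := s_factor p a
  rw [hg, mul_pow, tpow, zero_mul]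

lemma FF_nat (m : ℕ) : FF p (m : ℚ_[p]) = (1 + -xV p) ^ m := GG_nat p _ (tpow p) m

lemma vander_nat (m₁ : ℕ) (c : ℚ_[p]) :
    FF p (m₁ : ℚ_[p]) * FF p c = FF p ((m₁ : ℚ_[p]) + c) := by
  have hdeg : ∀ n < p, (Pn p n).natDegree < p := fun n hn =>
    lt_of_le_of_lt (Pn_natDegree_le p n) hn
  have hdeg2 : ∀ n < p, ((Pn p n).comp (X + C (m₁ : ℚ_[p]))).natDegree < p := by
    intro n hn
    refine lt_of_le_of_lt (natDegree_comp_le.trans ?_) hn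
    rw [natDegree_X_add_C, mul_one]
    exact Pn_natDegree_le p n
  have key := ext_nat p (fun n => Pn p n) (fun n => (Pn p n).comp (X + C (m₁ : ℚ_[p])))
    hdeg hdeg2 (fun n => FF p (m₁ : ℚ_[p]) * (-xV p) ^ n) (fun n => (-xV p) ^ n)
    (fun m₂ => by
      have l1 : ∀ b : ℚ_[p], ∑ n ∈ range p, (Pn p n).eval b • (FF p (m₁ : ℚ_[p]) * (-xV p) ^ n)
          = FF p (m₁ : ℚ_[p]) * FF p b := by
        intro b
        simp only [FF, GG, Finset.mul_sum]
        exact Finset.sum_congr rfl fun n _ => by rw [pbinom_eq, mul_smul_comm]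
      rw [l1]
      have l2 : ∑ n ∈ range p, ((Pn p n).comp (X + C (m₁ : ℚ_[p]))).eval (m₂ : ℚ_[p]) • (-xV p) ^ n
          = FF p ((m₂ : ℚ_[p]) + (m₁ : ℚ_[p])) := by
        rw [FF, GG]
        exact (Finset.sum_congr rfl fun n _ => by
          rw [pbinom_eq, eval_comp, eval_add, eval_X, eval_C]).symm
      rw [l2, FF_nat, FF_nat]
      have : ((m₂ : ℚ_[p]) + (m₁ : ℚ_[p])) = ((m₂ + m₁ : ℕ) : ℚ_[p]) := by push_cast; ring
      rw [this, FF_nat, ← pow_add, Nat.add_comm m₁ m₂]) c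
  have l1 : ∑ n ∈ range p, (Pn p n).eval c • (FF p (m₁ : ℚ_[p]) * (-xV p) ^ n)
      = FF p (m₁ : ℚ_[p]) * FF p c := by
    simp only [FF, GG, Finset.mul_sum]
    exact Finset.sum_congr rfl fun n _ => by rw [pbinom_eq, mul_smul_comm]
  have l2 : ∑ n ∈ range p, ((Pn p n).comp (X + C (m₁ : ℚ_[p]))).eval c • (-xV p) ^ n
      = FF p (c + (m₁ : ℚ_[p])) := by
    rw [FF, GG]
    exact (Finset.sum_congr rfl fun n _ => by
      rw [pbinom_eq, eval_comp, eval_add, eval_X, eval_C]).symm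
  rw [l1, l2] at key
  rw [key, add_comm]

lemma vander (a c : ℚ_[p]) : FF p a * FF p c = FF p (a + c) := by
  have hdeg : ∀ n < p, (Pn p n).natDegree < p := fun n hn =>
    lt_of_le_of_lt (Pn_natDegree_le p n) hn
  have hdeg2 : ∀ n < p, ((Pn p n).comp (X + C c)).natDegree < p := by
    intro n hn
    refine lt_of_le_of_lt (natDegree_comp_le.trans ?_) hn
    rw [natDegree_X_add_C, mul_one]
    exact Pn_natDegree_le p n
  have l1 : ∀ b : ℚ_[p], ∑ n ∈ range p, (Pn p n).eval b • (FF p c * (-xV p) ^ n)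
      = FF p c * FF p b := by
    intro b
    simp only [FF, GG, Finset.mul_sum]
    exact Finset.sum_congr rfl fun n _ => by rw [pbinom_eq, mul_smul_comm]
  have l2 : ∀ b : ℚ_[p], ∑ n ∈ range p, ((Pn p n).comp (X + C c)).eval b • (-xV p) ^ n
      = FF p (b + c) := by
    intro b
    rw [FF, GG]
    exact (Finset.sum_congr rfl fun n _ => by
      rw [pbinom_eq, eval_comp, eval_add, eval_X, eval_C]).symm
  have key := ext_nat p (fun n => Pn p n) (fun n => (Pn p n).comp (X + C c))
    hdeg hdeg2 (fun n => FF p c * (-xV p) ^ n) (fun n => (-xV p) ^ n)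
    (fun m => by rw [l1, l2, mul_comm, vander_nat]) a
  rw [l1, l2] at key
  rw [mul_comm, key, add_comm]

lemma FF_mul_nat (a : ℚ_[p]) (m : ℕ) : FF p (a * (m : ℚ_[p])) = (FF p a) ^ m := by
  induction m with
  | zero =>
    simp only [Nat.cast_zero, mul_zero, pow_zero]
    have : (0 : ℚ_[p]) = ((0 : ℕ) : ℚ_[p]) := by norm_cast
    rw [this, FF_nat, pow_zero]
  | succ k ih =>
    have : a * ((k + 1 : ℕ) : ℚ_[p]) = a * (k : ℚ_[p]) + a := by push_cast; ring
    rw [this, ← vander, ih, pow_succ]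

lemma mainB (a b : ℚ_[p]) : GG p (FF p a - 1) b = FF p (a * b) := by
  have hdeg : ∀ n < p, (Pn p n).natDegree < p := fun n hn =>
    lt_of_le_of_lt (Pn_natDegree_le p n) hn
  have hdeg2 : ∀ n < p, ((Pn p n).comp (C a * X)).natDegree < p := by
    intro n hn
    refine lt_of_le_of_lt (natDegree_comp_le.trans ?_) hn
    calc (Pn p n).natDegree * (C a * X).natDegree
        ≤ n * 1 := Nat.mul_le_mul (Pn_natDegree_le p n)
          ((natDegree_mul_le).trans (by simp))
      _ = n := mul_one n
  have l1 : ∀ b : ℚ_[p], ∑ n ∈ range p, (Pn p n).eval b • (FF p a - 1) ^ n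
      = GG p (FF p a - 1) b := by
    intro b
    rw [GG]
    exact Finset.sum_congr rfl fun n _ => by rw [pbinom_eq]
  have l2 : ∀ b : ℚ_[p], ∑ n ∈ range p, ((Pn p n).comp (C a * X)).eval b • (-xV p) ^ n
      = FF p (a * b) := by
    intro b
    rw [FF, GG]
    exact (Finset.sum_congr rfl fun n _ => by
      rw [pbinom_eq, eval_comp, eval_mul, eval_X, eval_C]).symm
  have key := ext_nat p (fun n => Pn p n) (fun n => (Pn p n).comp (C a * X))
    hdeg hdeg2 (fun n => (FF p a - 1) ^ n) (fun n => (-xV p) ^ n)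
    (fun m => by
      rw [l1, l2, GG_nat p _ (s_pow p a) m, add_sub_cancel, FF_mul_nat]) b
  rw [l1, l2] at key
  exact key

end Adams

open Adams

lemma coe_pow_alg (p : ℕ) [Fact p.Prime] (Φ : TruncV p →ₐ[ℚ_[p]] TruncV p) (n : ℕ) :
    ⇑(Φ ^ n) = (⇑Φ)^[n] := by
  induction n with
  | zero => rfl
  | succ k ih =>
    funext v
    rw [pow_succ, AlgHom.mul_apply, ih, Function.iterate_succ_apply]

theorem adams_pow_orderOf (p : ℕ) [Fact p.Prime] (hp : Odd p) (ζ : ℤ_[p])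
    (hζ : ζ ^ (p - 1) = 1) (hord : orderOf ζ = p - 1)
    (Φ : TruncV p →ₐ[ℚ_[p]] TruncV p)
    (hΦ : Φ (xV p) = phiImg p (ζ : ℚ_[p])) :
    (⇑Φ)^[p - 1] = id := by
  have hphi : ∀ a : ℚ_[p], phiImg p a = 1 - FF p a := fun a => by
    rw [phiImg, FF, GG]
  have hx : Φ (-xV p) = FF p (ζ : ℚ_[p]) - 1 := by
    rw [map_neg, hΦ, hphi, neg_sub]
  have key : ∀ c : ℚ_[p], Φ (FF p c) = FF p ((ζ : ℚ_[p]) * c) := by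
    intro c
    rw [← mainB p (ζ : ℚ_[p]) c]
    rw [show FF p c = ∑ n ∈ range p, pbinom p c n • (-xV p) ^ n from rfl]
    rw [map_sum]
    rw [GG]
    exact Finset.sum_congr rfl fun n _ => by
      rw [map_smul, map_pow, hx]
  have hFF1 : FF p (1 : ℚ_[p]) = 1 - xV p := by
    have : (1 : ℚ_[p]) = ((1 : ℕ) : ℚ_[p]) := by norm_cast
    rw [this, FF_nat, pow_one]
    ring
  have iter : ∀ k : ℕ, (⇑Φ)^[k] (xV p) = 1 - FF p ((ζ : ℚ_[p]) ^ k) := by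
    intro k
    induction k with
    | zero =>
      simp only [Function.iterate_zero, id_eq, pow_zero, hFF1]
      ring
    | succ j ih =>
      rw [Function.iterate_succ_apply', ih, map_sub, map_one, key, ← pow_succ']
  have hxfix : (⇑Φ)^[p - 1] (xV p) = xV p := by
    rw [iter (p - 1)]
    have : ((ζ : ℚ_[p])) ^ (p - 1) = (1 : ℚ_[p]) := by
      have := congrArg (fun z : ℤ_[p] => (z : ℚ_[p])) hζ
      push_cast at this
      exact this
    rw [this, hFF1]
    ring
  have hpow : Φ ^ (p - 1) = AlgHom.id ℚ_[p] (TruncV p) := by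
    apply Ideal.Quotient.algHom_ext
    apply Polynomial.algHom_ext
    show (Φ ^ (p - 1)) (Ideal.Quotient.mk _ X) = Ideal.Quotient.mk _ X
    rw [show (Ideal.Quotient.mk (Ideal.span {(X : Polynomial ℚ_[p]) ^ p}) X) = xV p from rfl]
    rw [coe_pow_alg]
    exact hxfix
  rw [← coe_pow_alg, hpow]
  rfl
end

section
/- Let p be an odd prime and let ζ ∈ ℤ_p be a primitive (p−1)-st root of unity. Then for all integers k, j with 1 ≤ k ≤ p−2 and 0 ≤ j ≤ k, the sum Σ_{i=0}^{p−2} ζ^{−ik} · C(ζ^i, j) (computed in ℚ_p, where ζ^{−ik} = (ζ^{p−1−k})^i) equals (p−1)/k! if j = k, and equals 0 if j < k. In particular, the lowest-order coefficient of the projection π_k(x) onto the ζ^k-eigenspace appears in degree k and is a p-adic unit multiple of 1/k!. -/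
/-- For `1 ≤ k ≤ p-2` and `0 ≤ j ≤ k`, the sum `Σ_{i=0}^{p-2} ζ^{-ik} C(ζ^i, j)` equals
`(p-1)/k!` if `j = k` and `0` if `j < k`. -/
theorem eigenprojection_lowest_coeff (p : ℕ) [Fact p.Prime] (hp : Odd p) (ζ : ℤ_[p])
    (hζ : ζ ^ (p - 1) = 1) (hord : orderOf ζ = p - 1)
    (k j : ℕ) (hk1 : 1 ≤ k) (hk2 : k ≤ p - 2) (hj : j ≤ k) :
    (j = k →
      ∑ i ∈ Finset.range (p - 1),
          ((ζ : ℚ_[p]) ^ (p - 1 - k)) ^ i * pbinom p ((ζ : ℚ_[p]) ^ i) j =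
        ((p : ℚ_[p]) - 1) / (k.factorial : ℚ_[p])) ∧
    (j < k →
      ∑ i ∈ Finset.range (p - 1),
          ((ζ : ℚ_[p]) ^ (p - 1 - k)) ^ i * pbinom p ((ζ : ℚ_[p]) ^ i) j = 0) := by
  have hp2 : 2 < p := by
    have h2 := (Fact.out : p.Prime).two_le
    rcases hp with ⟨n, hn⟩
    omega
  have hζQ : ((ζ : ℚ_[p])) ^ (p - 1) = 1 := by
    have := congrArg (fun x : ℤ_[p] => (x : ℚ_[p])) hζ
    push_cast at this
    exact this
  have geom : ∀ s : ℕ, 1 ≤ s → s ≤ p - 1 →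
      ∑ i ∈ Finset.range (p - 1), ((ζ : ℚ_[p]) ^ s) ^ i =
        if s = p - 1 then (p : ℚ_[p]) - 1 else 0 := by
    intro s hs1 hs2
    by_cases h : s = p - 1
    · subst h
      rw [if_pos rfl]
      simp only [hζQ, one_pow, Finset.sum_const, Finset.card_range, nsmul_eq_mul, mul_one]
      push_cast [Nat.cast_sub (by omega : 1 ≤ p)]
      ring
    · rw [if_neg h]
      have hne : ((ζ : ℚ_[p]) ^ s) ≠ 1 := by
        intro hcon
        have hzs : ζ ^ s = 1 := by
          have : ((ζ ^ s : ℤ_[p]) : ℚ_[p]) = ((1 : ℤ_[p]) : ℚ_[p]) := by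
            push_cast
            exact hcon
          exact Subtype.coe_injective this
        have hdvd : p - 1 ∣ s := hord ▸ orderOf_dvd_of_pow_eq_one hzs
        have := Nat.le_of_dvd (by omega) hdvd
        omega
      rw [geom_sum_eq hne]
      have hz : ((ζ : ℚ_[p]) ^ s) ^ (p - 1) = 1 := by
        rw [← pow_mul, mul_comm, pow_mul, hζQ, one_pow]
      simp [hz]
  have hdeg : (descPochhammer ℚ_[p] j).natDegree = j := descPochhammer_natDegree (R := ℚ_[p]) j
  have hev : ∀ y : ℚ_[p], pbinom p y j =
      ∑ m ∈ Finset.range (j + 1),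
        (descPochhammer ℚ_[p] j).coeff m / (j.factorial : ℚ_[p]) * y ^ m := by
    intro y
    rw [pbinom, Polynomial.eval_eq_sum_range, hdeg, Finset.sum_div]
    exact Finset.sum_congr rfl fun m _ => by ring
  have key : ∑ i ∈ Finset.range (p - 1),
        ((ζ : ℚ_[p]) ^ (p - 1 - k)) ^ i * pbinom p ((ζ : ℚ_[p]) ^ i) j =
      ∑ m ∈ Finset.range (j + 1),
        ((descPochhammer ℚ_[p] j).coeff m / (j.factorial : ℚ_[p])) *
          ∑ i ∈ Finset.range (p - 1), ((ζ : ℚ_[p]) ^ (p - 1 - k + m)) ^ i := by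
    have step : ∑ i ∈ Finset.range (p - 1),
          ((ζ : ℚ_[p]) ^ (p - 1 - k)) ^ i * pbinom p ((ζ : ℚ_[p]) ^ i) j =
        ∑ i ∈ Finset.range (p - 1), ∑ m ∈ Finset.range (j + 1),
          ((descPochhammer ℚ_[p] j).coeff m / (j.factorial : ℚ_[p])) *
            ((ζ : ℚ_[p]) ^ (p - 1 - k + m)) ^ i := by
      refine Finset.sum_congr rfl fun i _ => ?_
      rw [hev, Finset.mul_sum]
      refine Finset.sum_congr rfl fun m _ => ?_
      have hpow : ((ζ : ℚ_[p]) ^ (p - 1 - k)) ^ i * ((ζ : ℚ_[p]) ^ i) ^ m =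
          ((ζ : ℚ_[p]) ^ (p - 1 - k + m)) ^ i := by
        rw [← pow_mul, ← pow_mul, ← pow_mul, ← pow_add]
        congr 1
        ring
      rw [← hpow]
      ring
    rw [step, Finset.sum_comm]
    exact Finset.sum_congr rfl fun m _ => by rw [Finset.mul_sum]
  have key2 : ∑ i ∈ Finset.range (p - 1),
        ((ζ : ℚ_[p]) ^ (p - 1 - k)) ^ i * pbinom p ((ζ : ℚ_[p]) ^ i) j =
      ∑ m ∈ Finset.range (j + 1),
        (if m = k then ((descPochhammer ℚ_[p] j).coeff m / (j.factorial : ℚ_[p])) *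
          ((p : ℚ_[p]) - 1) else 0) := by
    rw [key]
    refine Finset.sum_congr rfl fun m hm => ?_
    have hm' : m ≤ j := by simpa [Nat.lt_succ_iff] using hm
    rw [geom (p - 1 - k + m) (by omega) (by omega)]
    by_cases hmk : m = k
    · rw [if_pos (by omega), if_pos hmk]
    · rw [if_neg (by omega), if_neg hmk, mul_zero]
  constructor
  · intro hjk
    subst hjk
    rw [key2, Finset.sum_ite_eq' (Finset.range (j + 1)) j]
    rw [if_pos (Finset.self_mem_range_succ j)]
    have hc : (descPochhammer ℚ_[p] j).coeff j = 1 := by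
      have := (monic_descPochhammer ℚ_[p] j).coeff_natDegree
      rwa [hdeg] at this
    rw [hc]
    ring
  · intro hjk
    rw [key2]
    refine Finset.sum_eq_zero fun m hm => ?_
    have hm' : m ≤ j := by simpa [Nat.lt_succ_iff] using hm
    rw [if_neg (by omega)]
end

section
/- Let p be an odd prime and let ζ ∈ ℤ_p be a primitive (p−1)-st root of unity. Then for every y ∈ ℚ_p, the sum of p-adic binomial coefficients Σ_{i=0}^{p−2} C(y·ζ^i, p−1) equals (p−1)·y^{p−1}/(p−1)! in ℚ_p. -/
/-- The sum `Σ_{i=0}^{p-2} C(y·ζ^i, p-1)` equals `(p-1)·y^{p-1}/(p-1)!`. -/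
theorem sum_pbinom_roots_top (p : ℕ) [Fact p.Prime] (hp : Odd p) (ζ : ℤ_[p])
    (hζ : ζ ^ (p - 1) = 1) (hord : orderOf ζ = p - 1) (y : ℚ_[p]) :
    ∑ i ∈ Finset.range (p - 1), pbinom p (y * (ζ : ℚ_[p]) ^ i) (p - 1) =
      ((p : ℚ_[p]) - 1) * y ^ (p - 1) / ((p - 1).factorial : ℚ_[p]) := by
  have hp1 : 1 < p := (Fact.out : p.Prime).one_lt
  set n := p - 1 with hn
  have hn0 : n ≠ 0 := by omega
  set z : ℚ_[p] := (ζ : ℚ_[p]) with hzdef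
  have hz : z ^ n = 1 := by
    rw [hzdef, ← PadicInt.coe_pow, hζ, PadicInt.coe_one]
  have hzk : ∀ k, z ^ k = 1 ↔ n ∣ k := by
    intro k
    constructor
    · intro h
      have hk : ζ ^ k = 1 := by
        apply Subtype.coe_injective
        show ((ζ ^ k : ℤ_[p]) : ℚ_[p]) = ((1 : ℤ_[p]) : ℚ_[p])
        rw [PadicInt.coe_pow, PadicInt.coe_one]
        exact h
      rw [← hord]; exact orderOf_dvd_of_pow_eq_one hk
    · rintro ⟨c, rfl⟩; rw [pow_mul, hz, one_pow]
  have hgeo : ∀ k, ∑ i ∈ Finset.range n, (z ^ k) ^ i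
      = if n ∣ k then (n : ℚ_[p]) else 0 := by
    intro k
    by_cases h : n ∣ k
    · rw [if_pos h, (hzk k).2 h]
      simp
    · rw [if_neg h]
      have hne : z ^ k ≠ 1 := fun hh => h ((hzk k).1 hh)
      rw [geom_sum_eq hne]
      have : (z ^ k) ^ n = 1 := by
        rw [← pow_mul, mul_comm, pow_mul, hz, one_pow]
      rw [this, sub_self, zero_div]
  have hdeg : (descPochhammer ℚ_[p] n).natDegree = n := descPochhammer_natDegree ℚ_[p] n
  have hmain : ∑ i ∈ Finset.range n, (descPochhammer ℚ_[p] n).eval (y * z ^ i)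
      = (n : ℚ_[p]) * y ^ n := by
    have heval : ∀ x : ℚ_[p], (descPochhammer ℚ_[p] n).eval x
        = ∑ k ∈ Finset.range (n + 1), (descPochhammer ℚ_[p] n).coeff k * x ^ k := by
      intro x
      conv_lhs => rw [Polynomial.eval_eq_sum_range, hdeg]
    calc ∑ i ∈ Finset.range n, (descPochhammer ℚ_[p] n).eval (y * z ^ i)
        = ∑ i ∈ Finset.range n, ∑ k ∈ Finset.range (n + 1),
            (descPochhammer ℚ_[p] n).coeff k * y ^ k * (z ^ k) ^ i := by
          refine Finset.sum_congr rfl fun i _ => ?_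
          rw [heval]
          refine Finset.sum_congr rfl fun k _ => ?_
          rw [mul_pow, ← pow_mul, mul_comm i k, pow_mul]
          ring
      _ = ∑ k ∈ Finset.range (n + 1),
            (descPochhammer ℚ_[p] n).coeff k * y ^ k *
              ∑ i ∈ Finset.range n, (z ^ k) ^ i := by
          rw [Finset.sum_comm]
          exact Finset.sum_congr rfl fun k _ => (Finset.mul_sum _ _ _).symm
      _ = (n : ℚ_[p]) * y ^ n := by
          rw [Finset.sum_eq_single n]
          · rw [hgeo, if_pos dvd_rfl]
            have : (descPochhammer ℚ_[p] n).coeff n = 1 := by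
              have := monic_descPochhammer ℚ_[p] n
              rw [Polynomial.Monic, Polynomial.leadingCoeff, hdeg] at this
              exact this
            rw [this]; ring
          · intro k hk hkn
            rw [hgeo]
            by_cases hdvd : n ∣ k
            · have hk0 : k = 0 := by
                rcases hdvd with ⟨c, rfl⟩
                rcases Nat.eq_zero_or_pos c with h0 | h0
                · simp [h0]
                · exfalso
                  have := Finset.mem_range.1 hk
                  rcases Nat.lt_or_ge c 2 with h2 | h2
                  · interval_cases c <;> simp_all
                  · nlinarith [Nat.pos_of_ne_zero hn0]
              subst hk0
              have : (descPochhammer ℚ_[p] n).coeff 0 = 0 := by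
                rw [Polynomial.coeff_zero_eq_eval_zero, descPochhammer_eval_zero,
                  if_neg hn0]
              rw [this]; ring
            · rw [if_neg hdvd]; ring
          · intro h
            exact absurd (Finset.self_mem_range_succ n) h
  have hcast : ((p : ℚ_[p]) - 1) = (n : ℚ_[p]) := by
    rw [hn]
    push_cast [Nat.cast_sub hp1.le]
    ring
  unfold pbinom
  rw [← Finset.sum_div, hmain, hcast]
end

section
/- Let p be an odd prime and let R := (ℤ/p²ℤ)[X]/(X^p), with x the class of X. Let a₁, b, d₀, d₁ ∈ ℤ/p²ℤ, and suppose that d₀ ≡ 1 (mod p) (i.e. d₀ − 1 lies in the ideal pℤ/p²ℤ) and that the equation d₀ + d₁·(1−(1−x)^p)^{p−1} = (1 − p·a₁ + p·b·x^{p−1}) · (d₀ + d₁·x^{p−1})^p holds in R. Then d₀ = 1 − p·a₁ in ℤ/p²ℤ, and d₁ ≡ −b (mod p). (This solves the unit equation ψ_p(u)/u^p = exp(−p(a₁ + b x^{p−1})) modulo (p², x^p) in Section 5.2, showing u = 1 + p·(unit) + (unit)·x^{p−1}.) -/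
open Polynomial

/-- The truncated polynomial ring `(ℤ/p²ℤ)[X]/(X^p)`. -/
abbrev TruncR (p : ℕ) : Type :=
  Polynomial (ZMod (p ^ 2)) ⧸ Ideal.span {(Polynomial.X : Polynomial (ZMod (p ^ 2))) ^ p}

/-- The class of `X` in `(ℤ/p²ℤ)[X]/(X^p)`. -/
noncomputable def xR (p : ℕ) : TruncR p :=
  Ideal.Quotient.mk _ Polynomial.X

/-- Binomial expansion when the second summand squares to zero. -/
lemma sq_zero_add_pow {R : Type*} [CommRing R] (a t : R) (ht : t ^ 2 = 0) :
    ∀ n : ℕ, (a + t) ^ n = a ^ n + n * a ^ (n - 1) * t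
  | 0 => by simp
  | 1 => by simp
  | (n + 2) => by
    have ih := sq_zero_add_pow a t ht (n + 1)
    calc (a + t) ^ (n + 2) = (a + t) ^ (n + 1) * (a + t) := by ring
      _ = (a ^ (n + 1) + (n + 1) * a ^ n * t) * (a + t) := by
          rw [ih]; norm_num
      _ = a ^ (n + 2) + (n + 2) * a ^ (n + 1) * t + (n + 1) * a ^ n * t ^ 2 := by
          push_cast; ring
      _ = a ^ (n + 2) + (n + 2 : ℕ) * a ^ (n + 2 - 1) * t := by
          rw [ht, show n + 2 - 1 = n + 1 from rfl]; push_cast; ring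

set_option maxHeartbeats 1000000 in
/-- Solving the unit equation `ψ_p(u)/u^p = exp(-p(a₁ + b x^{p-1}))` modulo `(p², x^p)`:
if `d₀ ≡ 1 (mod p)` and
`d₀ + d₁ (1-(1-x)^p)^{p-1} = (1 - p a₁ + p b x^{p-1}) (d₀ + d₁ x^{p-1})^p` in `R`,
then `d₀ = 1 - p a₁` and `d₁ ≡ -b (mod p)`. -/
theorem unit_equation_solution (p : ℕ) (hp : p.Prime) (hodd : Odd p)
    (a₁ b d₀ d₁ : ZMod (p ^ 2))
    (hd₀ : d₀ - 1 ∈ Ideal.span {(p : ZMod (p ^ 2))})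
    (heq : algebraMap (ZMod (p ^ 2)) (TruncR p) d₀ +
        algebraMap (ZMod (p ^ 2)) (TruncR p) d₁ * (1 - (1 - xR p) ^ p) ^ (p - 1) =
      (algebraMap (ZMod (p ^ 2)) (TruncR p) (1 - (p : ZMod (p ^ 2)) * a₁) +
          algebraMap (ZMod (p ^ 2)) (TruncR p) ((p : ZMod (p ^ 2)) * b) * xR p ^ (p - 1)) *
        (algebraMap (ZMod (p ^ 2)) (TruncR p) d₀ +
            algebraMap (ZMod (p ^ 2)) (TruncR p) d₁ * xR p ^ (p - 1)) ^ p) :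
    d₀ = 1 - (p : ZMod (p ^ 2)) * a₁ ∧ d₁ + b ∈ Ideal.span {(p : ZMod (p ^ 2))} := by
  have hp2 : 2 ≤ p := hp.two_le
  have hpne2 : p ≠ 2 := by rintro rfl; exact (Nat.not_odd_iff_even.mpr (by norm_num)) hodd
  have hp3 : 3 ≤ p := by omega
  set I : Ideal (Polynomial (ZMod (p ^ 2))) :=
    Ideal.span {(Polynomial.X : Polynomial (ZMod (p ^ 2))) ^ p} with hI
  set φ := algebraMap (ZMod (p ^ 2)) (TruncR p) with hφ
  have hmk : ∀ d : ZMod (p ^ 2), φ d = Ideal.Quotient.mk I (C d) := fun d => rfl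
  have hxp : (xR p) ^ p = 0 := by
    rw [xR, ← map_pow, Ideal.Quotient.eq_zero_iff_mem]
    exact Ideal.subset_span rfl
  have hpsq : ((p : TruncR p)) ^ 2 = 0 := by
    have h1 : ((p : TruncR p)) ^ 2 = ((p ^ 2 : ℕ) : TruncR p) := by push_cast; ring
    have h2 : ((p ^ 2 : ℕ) : TruncR p) = φ ((p ^ 2 : ℕ) : ZMod (p ^ 2)) :=
      (map_natCast φ _).symm
    rw [h1, h2, ZMod.natCast_self, map_zero]
  have hpz2 : ((p : ZMod (p ^ 2))) ^ 2 = 0 := by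
    have h1 : ((p : ZMod (p ^ 2))) ^ 2 = ((p ^ 2 : ℕ) : ZMod (p ^ 2)) := by push_cast; ring
    rw [h1, ZMod.natCast_self]
  -- (1 - (1-x)^p)^(p-1) = 0
  have hA : (1 - (1 - xR p) ^ p) ^ (p - 1) = 0 := by
    obtain ⟨r, hr⟩ : ∃ r : TruncR p, (1 + -xR p) ^ p = 1 ^ p + (-xR p) ^ p + (p : TruncR p) * r := by
      obtain ⟨r0, hr0⟩ := Commute.exists_add_pow_prime_eq hp (Commute.all (1 : TruncR p) (-xR p))
      exact ⟨1 * -xR p * r0, by rw [hr0]; ring⟩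
    have hneg : (-xR p) ^ p = 0 := by
      rw [show (-xR p) = (-1) * xR p by ring, mul_pow, hxp, mul_zero]
    have h1x : (1 - xR p) ^ p = 1 + (p : TruncR p) * r := by
      rw [sub_eq_add_neg, hr, hneg, one_pow]; ring
    have : (1 - (1 - xR p) ^ p) = (p : TruncR p) * (-r) := by rw [h1x]; ring
    rw [this, mul_pow]
    have : ((p : TruncR p)) ^ (p - 1) = 0 := by
      have he : p - 1 = 2 + (p - 3) := by omega
      rw [he, pow_add, hpsq, zero_mul]
    rw [this, zero_mul]
  have hx2 : (xR p ^ (p - 1)) ^ 2 = 0 := by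
    rw [← pow_mul, show (p - 1) * 2 = p + (p - 2) by omega, pow_add, hxp, zero_mul]
  -- d₀ = 1 + p c
  obtain ⟨c, hc⟩ := Ideal.mem_span_singleton'.mp hd₀
  have hd0 : d₀ = 1 + (p : ZMod (p ^ 2)) * c := by linear_combination -hc
  have htc : ((p : ZMod (p ^ 2)) * c) ^ 2 = 0 := by
    rw [mul_pow, hpz2, zero_mul]
  have h1 : d₀ ^ p = 1 := by
    rw [hd0, sq_zero_add_pow 1 ((p : ZMod (p ^ 2)) * c) htc p, one_pow, one_pow]
    linear_combination c * hpz2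
  have h2 : (p : ZMod (p ^ 2)) * d₀ ^ (p - 1) = p := by
    rw [hd0, sq_zero_add_pow 1 ((p : ZMod (p ^ 2)) * c) htc (p - 1), one_pow, one_pow]
    linear_combination (((p - 1 : ℕ) : ZMod (p ^ 2)) * c) * hpz2
  -- power of d₀ + d₁ x^{p-1}
  have ht2 : (φ d₁ * xR p ^ (p - 1)) ^ 2 = 0 := by rw [mul_pow, hx2, mul_zero]
  have hDpow : (φ d₀ + φ d₁ * xR p ^ (p - 1)) ^ p
      = 1 + φ ((p : ZMod (p ^ 2)) * d₁) * xR p ^ (p - 1) := by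
    rw [sq_zero_add_pow _ _ ht2 p, ← map_pow, h1, map_one]
    have hstep : (p : TruncR p) * φ d₀ ^ (p - 1) * φ d₁ = φ ((p : ZMod (p ^ 2)) * d₁) := by
      have : φ ((p : ZMod (p ^ 2)) * d₀ ^ (p - 1) * d₁) = φ ((p : ZMod (p ^ 2)) * d₁) := by
        rw [h2]
      rw [map_mul, map_mul, map_pow, map_natCast] at this
      exact this
    linear_combination (xR p ^ (p - 1)) * hstep
  have e1 : (1 - (p : ZMod (p ^ 2)) * a₁) * ((p : ZMod (p ^ 2)) * d₁)
      = (p : ZMod (p ^ 2)) * d₁ := by linear_combination (-(a₁ * d₁)) * hpz2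
  have key : φ d₀ = φ (1 - (p : ZMod (p ^ 2)) * a₁)
      + φ ((p : ZMod (p ^ 2)) * b + (p : ZMod (p ^ 2)) * d₁) * xR p ^ (p - 1) := by
    calc φ d₀ = φ d₀ + φ d₁ * (1 - (1 - xR p) ^ p) ^ (p - 1) := by rw [hA]; ring
      _ = (φ (1 - (p : ZMod (p ^ 2)) * a₁) + φ ((p : ZMod (p ^ 2)) * b) * xR p ^ (p - 1)) *
            (φ d₀ + φ d₁ * xR p ^ (p - 1)) ^ p := heq
      _ = (φ (1 - (p : ZMod (p ^ 2)) * a₁) + φ ((p : ZMod (p ^ 2)) * b) * xR p ^ (p - 1)) *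
            (1 + φ ((p : ZMod (p ^ 2)) * d₁) * xR p ^ (p - 1)) := by rw [hDpow]
      _ = φ (1 - (p : ZMod (p ^ 2)) * a₁)
            + (φ ((p : ZMod (p ^ 2)) * b)
              + φ (1 - (p : ZMod (p ^ 2)) * a₁) * φ ((p : ZMod (p ^ 2)) * d₁))
              * xR p ^ (p - 1) := by
          linear_combination (φ ((p : ZMod (p ^ 2)) * b) * φ ((p : ZMod (p ^ 2)) * d₁)) * hx2
      _ = φ (1 - (p : ZMod (p ^ 2)) * a₁)
            + φ ((p : ZMod (p ^ 2)) * b + (p : ZMod (p ^ 2)) * d₁) * xR p ^ (p - 1) := by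
          rw [← map_mul, e1, ← map_add]
  -- pull back to the polynomial ring
  have key' : Ideal.Quotient.mk I (C d₀) = Ideal.Quotient.mk I
      (C (1 - (p : ZMod (p ^ 2)) * a₁)
        + C ((p : ZMod (p ^ 2)) * b + (p : ZMod (p ^ 2)) * d₁) * X ^ (p - 1)) := by
    rw [map_add, map_mul, map_pow, ← hmk, ← hmk, ← hmk]
    exact key
  have hmk0 : Ideal.Quotient.mk I (C d₀ - (C (1 - (p : ZMod (p ^ 2)) * a₁)
      + C ((p : ZMod (p ^ 2)) * b + (p : ZMod (p ^ 2)) * d₁) * X ^ (p - 1))) = 0 := by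
    rw [map_sub, key', sub_self]
  have hmem := Ideal.Quotient.eq_zero_iff_mem.mp hmk0
  obtain ⟨r, hr⟩ := Ideal.mem_span_singleton'.mp hmem
  have hple : ¬ p ≤ 0 := by omega
  have hple2 : ¬ p ≤ p - 1 := by omega
  have hne : p - 1 ≠ 0 := by omega
  have h0 := congrArg (fun q => Polynomial.coeff q 0) hr
  simp [coeff_mul_X_pow', coeff_C, coeff_X_pow, coeff_one, hple, hne, Ne.symm hne,
    show (0 : ℕ) ≠ p by omega, show ¬ (p - 1 : ℕ) ≤ 0 by omega] at h0
  have h9 := congrArg (fun q => Polynomial.coeff q (p - 1)) hr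
  simp [coeff_mul_X_pow', coeff_C, coeff_X_pow, coeff_one, hple2, hne,
    show ¬ (p - 1 : ℕ) = p by omega] at h9
  have hleft : d₀ = 1 - (p : ZMod (p ^ 2)) * a₁ := by linear_combination -h0
  refine ⟨hleft, ?_⟩
  have hzero : (p : ZMod (p ^ 2)) * (d₁ + b) = 0 := by linear_combination h9
  haveI : NeZero (p ^ 2) := ⟨pow_ne_zero 2 hp.ne_zero⟩
  obtain ⟨m, hm'⟩ : ∃ m : ℕ, (m : ZMod (p ^ 2)) = d₁ + b := ZMod.natCast_zmod_surjective _
  rw [← hm'] at hzero ⊢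
  have : ((p * m : ℕ) : ZMod (p ^ 2)) = 0 := by push_cast; exact hzero
  rw [ZMod.natCast_eq_zero_iff] at this
  obtain ⟨k, hk⟩ := this
  have hm : m = p * k := Nat.eq_of_mul_eq_mul_left hp.pos (by rw [hk]; ring)
  rw [Ideal.mem_span_singleton, hm]
  exact ⟨(k : ZMod (p ^ 2)), by push_cast; ring⟩
end

section
/- Let p be a prime and k ≥ 1 an integer. Let M := ⊕_{i∈ℕ} ℤ_p be the free ℤ_p-module on basis (e_i)_{i∈ℕ} (finitely supported functions ℕ → ℤ_p), and let T : M → M be the ℤ_p-linear map defined on the basis by T(e_i) = p·e_i + e_{i−k} if i ≥ k, and T(e_i) = p·e_i if i < k. Then T is injective, and the quotient module M / T(M) is isomorphic as a ℤ_p-module to (ℚ_p/ℤ_p)^k, the direct sum of k copies of the Prüfer module ℚ_p/ℤ_p (the quotient of ℚ_p by the image of ℤ_p). (This computes the even homotopy groups π_{2*} THH^{K_p^∧}(K/p) ≅ (ℤ/p^∞)^k as the cokernel of u−1 = p + x^k acting on K_p^∧-homology of CP^∞, and the vanishing of odd homotopy groups via injectivity.) -/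
/-- `ℤ_p` embedded in `ℚ_p` as a `ℤ_p`-submodule. -/
noncomputable def padicIntSubmodule (p : ℕ) [Fact p.Prime] : Submodule ℤ_[p] ℚ_[p] :=
  LinearMap.range (Algebra.linearMap ℤ_[p] ℚ_[p])

section Aux
variable (p k : ℕ) [hp : Fact p.Prime]

lemma pq_ne_zero : (p : ℚ_[p]) ≠ 0 := by exact_mod_cast hp.out.ne_zero

lemma zp_smul_def (c : ℤ_[p]) (v : ℚ_[p]) : c • v = (c : ℚ_[p]) * v := by
  rw [Algebra.smul_def]; rfl

lemma mem_padicIntSubmodule_iff (z : ℚ_[p]) :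
    z ∈ padicIntSubmodule p ↔ ∃ c : ℤ_[p], (c : ℚ_[p]) = z := Iff.rfl

noncomputable def ggAux : ℕ → ℚ_[p] := fun i => (-1)^(i/k) * ((p:ℚ_[p])^(i/k+1))⁻¹

noncomputable def psiAux (r : ℕ) : (ℕ →₀ ℤ_[p]) →ₗ[ℤ_[p]] ℚ_[p] :=
  Finsupp.lsum ℕ fun i => LinearMap.toSpanSingleton ℤ_[p] ℚ_[p]
    (if i % k = r then ggAux p k i else 0)

noncomputable def phiAux : (ℕ →₀ ℤ_[p]) →ₗ[ℤ_[p]] (Fin k → ℚ_[p] ⧸ padicIntSubmodule p) :=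
  LinearMap.pi fun r => (padicIntSubmodule p).mkQ ∘ₗ psiAux p k (r : ℕ)

lemma psiAux_single (r i : ℕ) (c : ℤ_[p]) :
    psiAux p k r (Finsupp.single i c) = c • (if i % k = r then ggAux p k i else 0) := by
  simp [psiAux]

lemma phiAux_apply (x : ℕ →₀ ℤ_[p]) (r : Fin k) :
    phiAux p k x r = Submodule.Quotient.mk (psiAux p k (r : ℕ) x) := rfl

variable (T : (ℕ →₀ ℤ_[p]) →ₗ[ℤ_[p]] (ℕ →₀ ℤ_[p]))
variable (hT : ∀ i : ℕ, T (Finsupp.single i 1) =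
      (p : ℤ_[p]) • Finsupp.single i 1 +
        (if k ≤ i then Finsupp.single (i - k) (1 : ℤ_[p]) else 0))

include hT in
lemma T_coeff (hk : 1 ≤ k) (x : ℕ →₀ ℤ_[p]) (n : ℕ) :
    T x n = (p : ℤ_[p]) * x n + x (n + k) := by
  induction x using Finsupp.induction_linear with
  | zero => simp
  | add a b ha hb => simp [map_add, ha, hb]; ring
  | single i c =>
    have h1 : Finsupp.single i c = c • Finsupp.single i (1:ℤ_[p]) := by simp
    rw [h1, map_smul, hT i]
    by_cases hik : k ≤ i
    · simp only [if_pos hik, Finsupp.smul_apply, Finsupp.coe_add, Pi.add_apply,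
        Finsupp.coe_smul, Pi.smul_apply, smul_eq_mul, Finsupp.single_apply]
      split_ifs <;> first | (exfalso; omega) | ring
    · simp only [if_neg hik, add_zero, Finsupp.smul_apply, Finsupp.coe_smul,
        Pi.smul_apply, smul_eq_mul, Finsupp.single_apply]
      split_ifs <;> first | (exfalso; omega) | ring

include hT in
lemma T_inj (hk : 1 ≤ k) : Function.Injective T := by
  rw [injective_iff_map_eq_zero]
  intro x hx
  by_contra hx0
  have hne : x.support.Nonempty := by
    rwa [Finsupp.support_nonempty_iff]
  set n := x.support.max' hne with hn
  have hmem : n ∈ x.support := x.support.max'_mem hne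
  have hnk : x (n + k) = 0 := by
    by_contra h
    have : n + k ∈ x.support := Finsupp.mem_support_iff.mpr h
    have := x.support.le_max' _ this
    omega
  have h0 : (0 : ℤ_[p]) = (p : ℤ_[p]) * x n + x (n + k) := by
    rw [← T_coeff p k T hT hk x n, hx]; rfl
  rw [hnk, add_zero] at h0
  have hp0 : (p : ℤ_[p]) ≠ 0 := by exact_mod_cast hp.out.ne_zero
  have hxn : x n ≠ 0 := Finsupp.mem_support_iff.mp hmem
  exact hxn (by
    rcases mul_eq_zero.mp h0.symm with h | h
    · exact absurd h hp0
    · exact h)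

include hT in
lemma psi_T_single_mem (hk : 1 ≤ k) (i r : ℕ) :
    psiAux p k r (T (Finsupp.single i 1)) ∈ padicIntSubmodule p := by
  have hp0 : (p : ℚ_[p]) ≠ 0 := pq_ne_zero p
  rw [hT i, map_add, map_smul, psiAux_single]
  by_cases hik : k ≤ i
  · rw [if_pos hik, psiAux_single]
    obtain ⟨j, rfl⟩ : ∃ j, i = k + j := ⟨i - k, by omega⟩
    have hmod : (k + j) % k = j % k := Nat.add_mod_left k j
    have hdiv : (k + j) / k = j / k + 1 := by
      rw [Nat.add_comm, Nat.add_div_right _ (by omega : 0 < k)]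
    have hsub : k + j - k = j := by omega
    rw [hsub, hmod]
    by_cases hr : j % k = r
    · rw [if_pos hr, if_pos hr]
      refine ⟨0, ?_⟩
      rw [one_smul, zp_smul_def]
      simp only [ggAux, hdiv]
      push_cast
      simp only [map_zero, one_smul]
      field_simp
      ring
    · rw [if_neg hr, if_neg hr]
      exact ⟨0, by simp⟩
  · rw [if_neg hik, map_zero, add_zero]
    by_cases hr : i % k = r
    · rw [if_pos hr]
      refine ⟨1, ?_⟩
      rw [zp_smul_def]
      have hdiv : i / k = 0 := Nat.div_eq_of_lt (by omega)
      simp only [ggAux, hdiv]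
      push_cast
      simp only [map_one, one_smul]
      field_simp
      rw [Algebra.linearMap_apply, map_one]
    · rw [if_neg hr]
      exact ⟨0, by simp⟩

include hT in
lemma phi_comp_T : (phiAux p k).comp T = 0 := by
  by_cases hk : 1 ≤ k
  · apply Finsupp.lhom_ext'
    intro i
    apply LinearMap.ext_ring
    simp only [LinearMap.comp_apply, Finsupp.lsingle_apply, LinearMap.zero_apply]
    funext r
    rw [phiAux_apply]
    rw [show (0 : Fin k → ℚ_[p] ⧸ padicIntSubmodule p) r = 0 from rfl]
    rw [Submodule.Quotient.mk_eq_zero]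
    exact psi_T_single_mem p k T hT hk i r
  · apply LinearMap.ext
    intro x
    funext r
    exact absurd r.isLt (by omega)

lemma psiAux_apply (r : ℕ) (x : ℕ →₀ ℤ_[p]) :
    psiAux p k r x = ∑ i ∈ x.support, x i • (if i % k = r then ggAux p k i else 0) := by
  simp [psiAux, Finsupp.lsum_apply, Finsupp.sum]

lemma dvd_top_coeff (x : ℕ →₀ ℤ_[p]) (n : ℕ)
    (hsupp : x.support ⊆ Finset.range (n+1)) (hxn : x n ≠ 0)
    (hmem : psiAux p k (n % k) x ∈ padicIntSubmodule p) :
    (p : ℤ_[p]) ∣ x n := by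
  have hp0 : (p : ℚ_[p]) ≠ 0 := pq_ne_zero p
  obtain ⟨c, hc⟩ := hmem
  set r := n % k with hr
  set J := n / k with hJ
  set τ : ℕ → ℤ_[p] := fun i =>
    if i % k = r then (-1)^(J + i/k) * (p:ℤ_[p])^(J - i/k) * x i else 0 with hτ
  have key : ∀ i ∈ x.support, ((τ i : ℚ_[p])) =
      ((-1)^J * (p:ℚ_[p])^(J+1)) * (x i • (if i % k = r then ggAux p k i else 0)) := by
    intro i hi
    have hin : i ≤ n := by
      have := hsupp hi; rw [Finset.mem_range] at this; omega
    have hq : i / k ≤ J := Nat.div_le_div_right hin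
    by_cases hir : i % k = r
    · rw [hτ]
      simp only [if_pos hir]
      rw [zp_smul_def, ggAux]
      push_cast
      have he : J + 1 = (J - i/k) + (i/k + 1) := by omega
      rw [he, pow_add, pow_add]
      have hppow : ((p:ℚ_[p])^(i/k+1)) ≠ 0 := pow_ne_zero _ hp0
      field_simp
    · simp [hτ, hir]
  have hsum : ((∑ i ∈ x.support, τ i : ℤ_[p]) : ℚ_[p])
      = ((-1)^J * (p:ℚ_[p])^(J+1)) * (c : ℚ_[p]) := by
    have hmap : ((∑ i ∈ x.support, τ i : ℤ_[p]) : ℚ_[p]) = ∑ i ∈ x.support, ((τ i : ℚ_[p])) :=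
      map_sum (PadicInt.Coe.ringHom) τ x.support
    rw [hmap, Finset.sum_congr rfl key, ← Finset.mul_sum, ← psiAux_apply, ← hc]
    rfl
  have hZ : (∑ i ∈ x.support, τ i) = (-1)^J * (p:ℤ_[p])^(J+1) * c := by
    have hco : (((-1)^J * (p:ℤ_[p])^(J+1) * c : ℤ_[p]) : ℚ_[p])
        = (-1)^J * (p:ℚ_[p])^(J+1) * (c:ℚ_[p]) := by push_cast; ring
    exact Subtype.coe_injective (hsum.trans hco.symm)
  have hnmem : n ∈ x.support := Finsupp.mem_support_iff.mpr hxn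
  have hτn : τ n = x n := by
    have h1 : τ n = (-1)^(J + n/k) * (p:ℤ_[p])^(J - n/k) * x n := by
      simp [hτ, hr]
    rw [h1, ← hJ, Nat.sub_self, pow_zero, mul_one, Even.neg_one_pow ⟨J, rfl⟩, one_mul]
  have hxeq : x n = (∑ i ∈ x.support, τ i) - ∑ i ∈ x.support.erase n, τ i := by
    rw [← Finset.add_sum_erase _ τ hnmem, ← hτn]; ring
  rw [hxeq, hZ]
  apply dvd_sub
  · exact ((dvd_pow_self (p:ℤ_[p]) (Nat.succ_ne_zero J)).mul_left _).mul_right _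
  · apply Finset.dvd_sum
    intro i hi
    have hine : i ≠ n := Finset.ne_of_mem_erase hi
    have hisupp : i ∈ x.support := Finset.mem_of_mem_erase hi
    have hin : i < n := by
      have := hsupp hisupp; rw [Finset.mem_range] at this; omega
    simp only [hτ]
    by_cases hir : i % k = r
    · rw [if_pos hir]
      have hk0 : 0 < k := by
        rcases Nat.eq_zero_or_pos k with h | h
        · subst h
          simp only [Nat.mod_zero] at hr hir
          omega
        · exact h
      have hdm1 := Nat.div_add_mod i k
      have hdm2 := Nat.div_add_mod n k
      have hlt : i / k < n / k := by
        by_contra h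
        push_neg at h
        have hmul : k * (n / k) ≤ k * (i / k) := Nat.mul_le_mul_left k h
        have hir' : i % k = n % k := by rw [hir, hr]
        omega
      refine ((dvd_pow_self (p:ℤ_[p]) (by omega : J - i/k ≠ 0)).mul_left _).mul_right _
    · rw [if_neg hir]
      exact dvd_zero _

include hT in
lemma ker_le_range (hk : 1 ≤ k) :
    LinearMap.ker (phiAux p k) ≤ LinearMap.range T := by
  suffices H : ∀ (n : ℕ) (x : ℕ →₀ ℤ_[p]), phiAux p k x = 0 →
      x.support ⊆ Finset.range n → x ∈ LinearMap.range T by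
    intro x hx
    refine H (x.support.sup id + 1) x (LinearMap.mem_ker.mp hx) ?_
    intro i hi
    rw [Finset.mem_range]
    exact Nat.lt_succ_of_le (Finset.le_sup (f := id) hi)
  intro n
  induction n with
  | zero =>
    intro x _ hs
    have : x = 0 := by
      rw [← Finsupp.support_eq_empty]
      simpa using Finset.subset_empty.mp hs
    rw [this]
    exact zero_mem _
  | succ n ih =>
    intro x hx hs
    by_cases hxn : x n = 0
    · refine ih x hx ?_
      intro i hi
      have h1 := hs hi
      rw [Finset.mem_range] at *
      have h2 : i ≠ n := fun h => (Finsupp.mem_support_iff.mp hi) (h ▸ hxn)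
      omega
    · have hmem : psiAux p k (n % k) x ∈ padicIntSubmodule p := by
        have h1 := congrFun hx ⟨n % k, Nat.mod_lt n hk⟩
        rw [phiAux_apply] at h1
        exact (Submodule.Quotient.mk_eq_zero _).mp h1
      obtain ⟨u, hu⟩ := dvd_top_coeff p k x n hs hxn hmem
      set y := x - T (Finsupp.single n u) with hy
      have hTy0 : phiAux p k (T (Finsupp.single n u)) = 0 :=
        LinearMap.congr_fun (phi_comp_T p k T hT) (Finsupp.single n u)
      have hy0 : phiAux p k y = 0 := by
        rw [hy, map_sub, hx, hTy0, sub_zero]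
      have hysupp : y.support ⊆ Finset.range n := by
        intro i hi
        rw [Finset.mem_range]
        by_contra h
        push_neg at h
        have hyi : y i ≠ 0 := Finsupp.mem_support_iff.mp hi
        have hTc : T (Finsupp.single n u) i
            = (p : ℤ_[p]) * Finsupp.single n u i + Finsupp.single n u (i + k) :=
          T_coeff p k T hT hk _ i
        have hyival : y i = x i - T (Finsupp.single n u) i := by
          rw [hy]; rfl
        rcases Nat.eq_or_lt_of_le h with h1 | h1
        · -- i = n
          apply hyi
          rw [hyival, hTc, ← h1]
          rw [Finsupp.single_eq_same]
          rw [Finsupp.single_eq_of_ne' (by omega : n ≠ n + k)]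
          rw [hu]; ring
        · -- i > n
          apply hyi
          have hxi : x i = 0 := by
            by_contra hxi
            have := hs (Finsupp.mem_support_iff.mpr hxi)
            rw [Finset.mem_range] at this
            omega
          rw [hyival, hTc, hxi,
            Finsupp.single_eq_of_ne' (by omega : n ≠ i),
            Finsupp.single_eq_of_ne' (by omega : n ≠ i + k)]
          ring
      obtain ⟨b, hb⟩ := ih y hy0 hysupp
      exact ⟨b + Finsupp.single n u, by rw [map_add, hb, hy]; abel⟩

lemma phi_surj (hk : 1 ≤ k) : Function.Surjective (phiAux p k) := by
  have hp0 : (p : ℚ_[p]) ≠ 0 := pq_ne_zero p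
  have hsingle : ∀ (r : Fin k) (z : ℚ_[p]),
      ∃ x, phiAux p k x = Pi.single r (Submodule.Quotient.mk z) := by
    intro r z
    obtain ⟨m, hm⟩ : ∃ m : ℕ, ‖z * (p:ℚ_[p])^(m+1)‖ ≤ 1 := by
      have hp1 : (1:ℝ) < p := by exact_mod_cast hp.out.one_lt
      obtain ⟨m, hm⟩ := pow_unbounded_of_one_lt ‖z‖ hp1
      refine ⟨m, ?_⟩
      have hpow : ‖(p:ℚ_[p])^(m+1)‖ = ((p:ℝ)^(m+1))⁻¹ := by
        rw [norm_pow, Padic.norm_p, inv_pow]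
      rw [norm_mul, hpow]
      have h2 : ‖z‖ ≤ (p:ℝ)^(m+1) :=
        le_of_lt (lt_of_lt_of_le hm (pow_le_pow_right₀ (le_of_lt hp1) (by omega)))
      have h3 : (0:ℝ) < (p:ℝ)^(m+1) := by positivity
      calc ‖z‖ * ((p:ℝ)^(m+1))⁻¹ ≤ (p:ℝ)^(m+1) * ((p:ℝ)^(m+1))⁻¹ := by
            apply mul_le_mul_of_nonneg_right h2 (by positivity)
        _ = 1 := mul_inv_cancel₀ (ne_of_gt h3)
    set a : ℤ_[p] := ⟨z * (p:ℚ_[p])^(m+1), hm⟩ with ha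
    refine ⟨Finsupp.single ((r:ℕ) + m * k) ((-1)^m * a), ?_⟩
    have hmod : ((r:ℕ) + m * k) % k = (r:ℕ) := by
      rw [Nat.add_mul_mod_self_right, Nat.mod_eq_of_lt r.isLt]
    have hdiv : ((r:ℕ) + m * k) / k = m := by
      rw [Nat.add_mul_div_right _ _ (by omega : 0 < k),
        Nat.div_eq_of_lt r.isLt, Nat.zero_add]
    funext r'
    rw [phiAux_apply, psiAux_single]
    by_cases hr : r' = r
    · subst hr
      rw [hmod, if_pos rfl, Pi.single_eq_same]
      congr 1
      rw [zp_smul_def]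
      have hacoe : ((((-1:ℤ_[p])^m * a) : ℤ_[p]) : ℚ_[p]) = (-1:ℚ_[p])^m * (z * (p:ℚ_[p])^(m+1)) := by
        rw [PadicInt.coe_mul, PadicInt.coe_pow, PadicInt.coe_neg, PadicInt.coe_one]
      have hppow : ((p:ℚ_[p])^(m+1)) ≠ 0 := pow_ne_zero _ hp0
      have hs1 : ((-1:ℚ_[p])^m) * ((-1:ℚ_[p])^m) = 1 := by
        rw [← pow_add]; exact Even.neg_one_pow ⟨m, rfl⟩
      simp only [ggAux, hdiv]
      rw [hacoe]
      trans (((-1:ℚ_[p])^m * (-1:ℚ_[p])^m) * ((p:ℚ_[p])^(m+1) * ((p:ℚ_[p])^(m+1))⁻¹) * z)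
      · ring
      · rw [hs1, mul_inv_cancel₀ hppow, one_mul, one_mul]
    · rw [Pi.single_eq_of_ne hr]
      have hcond : ¬ (((r:ℕ) + m * k) % k = (r' : ℕ)) := by
        rw [hmod]
        exact fun h => hr (Fin.ext h.symm)
      rw [if_neg hcond, smul_zero]
      exact (Submodule.Quotient.mk_eq_zero _).mpr (zero_mem _)
  intro y
  have hy : y = ∑ r, Pi.single r (y r) := (Finset.univ_sum_single y).symm
  have : y ∈ LinearMap.range (phiAux p k) := by
    rw [hy]
    apply Submodule.sum_mem
    intro r _
    obtain ⟨z, hz⟩ := Submodule.Quotient.mk_surjective _ (y r)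
    obtain ⟨x, hx⟩ := hsingle r z
    exact ⟨x, by rw [hx, hz]⟩
  exact this

end Aux


/-- If `T` is the `ℤ_p`-linear endomorphism of `M = ⊕_{i∈ℕ} ℤ_p` with
`T(e_i) = p·e_i + e_{i-k}` for `i ≥ k` and `T(e_i) = p·e_i` for `i < k`, then `T` is
injective and `M / T(M) ≅ (ℚ_p/ℤ_p)^k` as `ℤ_p`-modules. -/
theorem cokernel_of_p_plus_shift (p k : ℕ) [Fact p.Prime] (hk : 1 ≤ k)
    (T : (ℕ →₀ ℤ_[p]) →ₗ[ℤ_[p]] (ℕ →₀ ℤ_[p]))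
    (hT : ∀ i : ℕ, T (Finsupp.single i 1) =
      (p : ℤ_[p]) • Finsupp.single i 1 +
        (if k ≤ i then Finsupp.single (i - k) (1 : ℤ_[p]) else 0)) :
    Function.Injective T ∧
    Nonempty (((ℕ →₀ ℤ_[p]) ⧸ LinearMap.range T) ≃ₗ[ℤ_[p]]
      (Fin k → ℚ_[p] ⧸ padicIntSubmodule p)) := by
  constructor
  · exact T_inj p k T hT hk
  · have hker : LinearMap.range T = LinearMap.ker (phiAux p k) := by
      apply le_antisymm
      · rintro _ ⟨x, rfl⟩
        rw [LinearMap.mem_ker]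
        exact LinearMap.congr_fun (phi_comp_T p k T hT) x
      · exact ker_le_range p k T hT hk
    exact ⟨(Submodule.quotEquivOfEq _ _ hker).trans
      ((phiAux p k).quotKerEquivOfSurjective (phi_surj p k hk))⟩
end
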